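/- Let L/K be a separable quadratic extension with Gal(L/K) = {1, σ}, and let A be a central simple L-algebra of dimension n² over L. Suppose I is a right ideal of the corestriction B = Cor_{L/K}(A) ⊆ A^σ ⊗_L A such that A^σ ⊗_L A = I_L ⊕ (1 ⊗ A) as L-vector spaces, where I_L = I ⊗_K L is the L-span of I inside A^σ ⊗_L A. Then the map τ_I : A → A defined by the condition a^σ ⊗ 1 − 1 ⊗ τ_I(a) ∈ I_L is a well-defined involution of the second kind on A (i.e., a K-linear anti-automorphism of order 2 restricting to σ on the center L). -/
import Mathlib


set_option synthInstance.maxHeartbeats 1000000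
set_option maxHeartbeats 1000000

open scoped TensorProduct

/-- Let `L/K` be a separable quadratic extension with nontrivial automorphism `σ`, `A` a
central simple `L`-algebra of dimension `n²`, `B = A^σ` its `σ`-twist (identified with `A`
via the ring isomorphism `e`), `Cor` the corestriction (the fixed subalgebra of the switch
map `s` on `A^σ ⊗_L A`), and `I` a right ideal of `Cor` with
`A^σ ⊗_L A = I_L ⊕ (1 ⊗ A)` where `I_L` is the `L`-span of `I`. Then the condition
`a^σ ⊗ 1 − 1 ⊗ τ(a) ∈ I_L` well-defines a map `τ = τ_I : A → A` which is an involution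
of the second kind on `A`. -/
theorem stmt18 (K L : Type*) [Field K] [Field L] [Algebra K L]
    [Algebra.IsSeparable K L] (hdim : Module.finrank K L = 2)
    (σ : L ≃ₐ[K] L) (hσ : ∃ l, σ l ≠ l)
    (n : ℕ)
    (A B : Type*) [Ring A] [Ring B] [Algebra L A] [Algebra L B]
    [Algebra K A] [Algebra K B] [IsScalarTower K L A] [IsScalarTower K L B]
    [Algebra.IsCentral L A] [IsSimpleRing A] [FiniteDimensional L A]
    (hn : Module.finrank L A = n^2)
    (e : B ≃+* A) (he : ∀ (l : L) (x : B), e (l • x) = σ l • e x)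
    (s : B ⊗[L] A →ₗ[K] B ⊗[L] A)
    (hs : ∀ (x : B) (y : A), s (x ⊗ₜ[L] y) = e.symm y ⊗ₜ[L] e x)
    (Cor : Subalgebra K (B ⊗[L] A)) (hCor : ∀ u, u ∈ Cor ↔ s u = u)
    (I : Submodule K (B ⊗[L] A)) (hIC : I ≤ Subalgebra.toSubmodule Cor)
    (hIright : ∀ u ∈ I, ∀ c ∈ Cor, u * c ∈ I)
    (hinf : Submodule.span L (I : Set (B ⊗[L] A)) ⊓
        LinearMap.range (Algebra.TensorProduct.includeRight :
          A →ₐ[L] B ⊗[L] A).toLinearMap = ⊥)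
    (hsup : Submodule.span L (I : Set (B ⊗[L] A)) ⊔
        LinearMap.range (Algebra.TensorProduct.includeRight :
          A →ₐ[L] B ⊗[L] A).toLinearMap = ⊤) :
    ∃ τ : A → A,
      (∀ a : A, (e.symm a ⊗ₜ[L] (1 : A)) - ((1 : B) ⊗ₜ[L] τ a)
          ∈ Submodule.span L (I : Set (B ⊗[L] A))) ∧
      (∀ a x : A, (e.symm a ⊗ₜ[L] (1 : A)) - ((1 : B) ⊗ₜ[L] x)
          ∈ Submodule.span L (I : Set (B ⊗[L] A)) → x = τ a) ∧
      (∀ x y : A, τ (x + y) = τ x + τ y) ∧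
      (∀ x y : A, τ (x * y) = τ y * τ x) ∧
      (∀ x : A, τ (τ x) = x) ∧
      (∀ l : L, τ (algebraMap L A l) = algebraMap L A (σ l)) := by
  classical
  set M : Submodule L (B ⊗[L] A) := Submodule.span L (I : Set (B ⊗[L] A)) with hM
  -- σ is an involution
  have hKL : FiniteDimensional K L := FiniteDimensional.of_finrank_pos (by omega)
  have hσne : σ ≠ 1 := by
    obtain ⟨l, hl⟩ := hσ
    intro h; exact hl (by rw [h]; rfl)
  have hcard : Fintype.card (L ≃ₐ[K] L) = 2 := by
    have h1 : Fintype.card (L ≃ₐ[K] L) ≤ 2 := by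
      calc Fintype.card (L ≃ₐ[K] L) = Fintype.card (L →ₐ[K] L) :=
            Fintype.card_congr (algEquivEquivAlgHom K L).toEquiv
        _ ≤ Module.finrank L (L →ₗ[K] L) := finrank_algHom K L
        _ = Module.finrank K L := Module.finrank_linearMap_self _ _ _
        _ = 2 := hdim
    have h2 : 1 < Fintype.card (L ≃ₐ[K] L) :=
      Fintype.one_lt_card_iff_nontrivial.2 ⟨⟨σ, 1, hσne⟩⟩
    omega
  have hσ2 : ∀ x, σ (σ x) = x := by
    intro x
    have h : σ ^ 2 = 1 := by rw [← hcard]; exact pow_card_eq_one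
    have := congrArg (fun f : L ≃ₐ[K] L => f x) h
    simpa [pow_succ, pow_zero] using this
  -- e.symm is σ-semilinear
  have he' : ∀ (l : L) (a : A), e.symm (l • a) = σ l • e.symm a := by
    intro l a
    apply e.injective
    rw [e.apply_symm_apply, he, hσ2, e.apply_symm_apply]
  -- s is an involution
  have hs2 : ∀ u, s (s u) = u := by
    intro u
    induction u using TensorProduct.induction_on with
    | zero => simp
    | tmul x y => rw [hs, hs, e.symm_apply_apply, e.apply_symm_apply]
    | add x y hx hy => rw [map_add, map_add, hx, hy]
  -- s is σ-semilinear
  have hssmul : ∀ (l : L) u, s (l • u) = σ l • s u := by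
    intro l u
    induction u using TensorProduct.induction_on with
    | zero => simp
    | tmul x y =>
        rw [TensorProduct.smul_tmul', hs, hs, he, ← TensorProduct.tmul_smul]
    | add x y hx hy =>
        rw [smul_add, map_add, hx, hy, map_add, smul_add]
  -- the L-span of Cor is everything
  have hCorSpan : Submodule.span L (Cor : Set (B ⊗[L] A)) = ⊤ := by
    obtain ⟨l, hl⟩ := hσ
    rw [eq_top_iff]
    rintro u -
    have ha : u + s u ∈ Cor := (hCor _).2 (by rw [map_add, hs2, add_comm])
    have hb : l • u + s (l • u) ∈ Cor := (hCor _).2 (by rw [map_add, hs2, add_comm])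
    have key : u = (l - σ l)⁻¹ • ((l • u + s (l • u)) - σ l • (u + s u)) := by
      rw [hssmul]
      have h1 : (l • u + σ l • s u) - σ l • (u + s u) = (l - σ l) • u := by
        rw [smul_add, sub_smul]; abel
      rw [h1, smul_smul, inv_mul_cancel₀ (sub_ne_zero.2 (Ne.symm hl)), one_smul]
    rw [key]
    exact Submodule.smul_mem _ _ (Submodule.sub_mem _ (Submodule.subset_span hb)
      (Submodule.smul_mem _ _ (Submodule.subset_span ha)))
  -- M is a right ideal of B ⊗ A
  have hMright : ∀ u ∈ M, ∀ v : B ⊗[L] A, u * v ∈ M := by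
    have h1 : M * Submodule.span L (Cor : Set (B ⊗[L] A)) ≤ M := by
      rw [hM, Submodule.span_mul_span]
      apply Submodule.span_le.2
      rintro _ ⟨i, hi, c, hc, rfl⟩
      exact Submodule.subset_span (hIright i hi c hc)
    intro u hu v
    have hv : v ∈ Submodule.span L (Cor : Set (B ⊗[L] A)) := by
      rw [hCorSpan]; trivial
    exact h1 (Submodule.mul_mem_mul hu hv)
  -- M is stable under s
  have hsM : ∀ u ∈ M, s u ∈ M := by
    intro u hu
    induction hu using Submodule.span_induction with
    | mem i hi =>
        rw [(hCor i).1 (hIC hi)]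
        exact Submodule.subset_span hi
    | zero => simpa using M.zero_mem
    | add x y hx hy hx' hy' => rw [map_add]; exact M.add_mem hx' hy'
    | smul l x hx hx' => rw [hssmul]; exact M.smul_mem _ hx'
  -- injectivity of a ↦ 1 ⊗ a
  have hBnt : Nontrivial B := e.toEquiv.nontrivial
  have hinj : ∀ x y : A, (1 : B) ⊗ₜ[L] x = (1 : B) ⊗ₜ[L] y → x = y := by
    obtain ⟨f, hf, -⟩ := Submodule.exists_dual_map_eq_bot_of_notMem
      (p := (⊥ : Submodule L B)) (x := (1 : B))
      (by simp [Submodule.mem_bot]) inferInstance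
    intro x y h
    set ψ : B ⊗[L] A →ₗ[L] A :=
      (TensorProduct.lid L A).toLinearMap ∘ₗ LinearMap.rTensor A f with hψ
    have hψt : ∀ (b : B) (a : A), ψ (b ⊗ₜ[L] a) = f b • a := by
      intro b a; simp [hψ]
    have := congrArg ψ h
    rw [hψt, hψt] at this
    exact smul_right_injective A hf this
  -- uniqueness
  have huniq : ∀ (v : B ⊗[L] A) (x y : A),
      v - (1 : B) ⊗ₜ[L] x ∈ M → v - (1 : B) ⊗ₜ[L] y ∈ M → x = y := by
    intro v x y hx hy
    have h1 : (1 : B) ⊗ₜ[L] x - (1 : B) ⊗ₜ[L] y ∈ M := by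
      have h := M.sub_mem hy hx
      rwa [show v - (1 : B) ⊗ₜ[L] y - (v - (1 : B) ⊗ₜ[L] x)
        = (1 : B) ⊗ₜ[L] x - (1 : B) ⊗ₜ[L] y by abel] at h
    have h2 : (1 : B) ⊗ₜ[L] x - (1 : B) ⊗ₜ[L] y ∈ LinearMap.range
        (Algebra.TensorProduct.includeRight : A →ₐ[L] B ⊗[L] A).toLinearMap := by
      exact ⟨x - y, by simp [TensorProduct.tmul_sub]⟩
    have h3 : (1 : B) ⊗ₜ[L] x - (1 : B) ⊗ₜ[L] y = 0 := by
      have := hinf ▸ (Submodule.mem_inf.2 ⟨h1, h2⟩)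
      simpa using this
    exact hinj x y (by rwa [sub_eq_zero] at h3)
  -- existence
  have hex : ∀ v : B ⊗[L] A, ∃ x : A, v - (1 : B) ⊗ₜ[L] x ∈ M := by
    intro v
    have hv : v ∈ M ⊔ LinearMap.range
        (Algebra.TensorProduct.includeRight : A →ₐ[L] B ⊗[L] A).toLinearMap := by
      rw [hsup]; trivial
    obtain ⟨m, hm, w, hw, rfl⟩ := Submodule.mem_sup.1 hv
    obtain ⟨x, rfl⟩ := hw
    exact ⟨x, by simpa using hm⟩
  set τ : A → A := fun a => Classical.choose (hex (e.symm a ⊗ₜ[L] (1 : A))) with hτdef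
  have hτ : ∀ a : A, e.symm a ⊗ₜ[L] (1 : A) - (1 : B) ⊗ₜ[L] τ a ∈ M := fun a =>
    Classical.choose_spec (hex (e.symm a ⊗ₜ[L] (1 : A)))
  refine ⟨τ, hτ, fun a x hx => huniq _ x (τ a) hx (hτ a), ?_, ?_, ?_, ?_⟩
  · -- additivity
    intro x y
    refine huniq (e.symm (x + y) ⊗ₜ[L] (1 : A)) (τ (x + y)) (τ x + τ y) (hτ _) ?_
    have : e.symm (x + y) ⊗ₜ[L] (1 : A) - (1 : B) ⊗ₜ[L] (τ x + τ y)
        = (e.symm x ⊗ₜ[L] (1 : A) - (1 : B) ⊗ₜ[L] τ x)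
          + (e.symm y ⊗ₜ[L] (1 : A) - (1 : B) ⊗ₜ[L] τ y) := by
      rw [map_add, TensorProduct.add_tmul, TensorProduct.tmul_add]; abel
    rw [this]
    exact M.add_mem (hτ x) (hτ y)
  · -- anti-multiplicativity
    intro x y
    refine huniq (e.symm (x * y) ⊗ₜ[L] (1 : A)) (τ (x * y)) (τ y * τ x) (hτ _) ?_
    have key : e.symm (x * y) ⊗ₜ[L] (1 : A) - (1 : B) ⊗ₜ[L] (τ y * τ x)
        = (e.symm x ⊗ₜ[L] (1 : A) - (1 : B) ⊗ₜ[L] τ x) * (e.symm y ⊗ₜ[L] (1 : A))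
          + (e.symm y ⊗ₜ[L] (1 : A) - (1 : B) ⊗ₜ[L] τ y) * ((1 : B) ⊗ₜ[L] τ x) := by
      rw [sub_mul, sub_mul, map_mul]
      simp only [Algebra.TensorProduct.tmul_mul_tmul, one_mul, mul_one]
      abel
    rw [key]
    exact M.add_mem (hMright _ (hτ x) _) (hMright _ (hτ y) _)
  · -- involutivity
    intro x
    refine (huniq (e.symm (τ x) ⊗ₜ[L] (1 : A)) x (τ (τ x)) ?_ (hτ (τ x))).symm
    have h1 := hsM _ (hτ x)
    rw [map_sub, hs, hs, map_one, map_one, e.apply_symm_apply] at h1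
    have h2 := M.neg_mem h1
    rwa [show -((1 : B) ⊗ₜ[L] x - e.symm (τ x) ⊗ₜ[L] (1 : A))
      = e.symm (τ x) ⊗ₜ[L] (1 : A) - (1 : B) ⊗ₜ[L] x by abel] at h2
  · -- behavior on the center
    intro l
    refine (huniq (e.symm (algebraMap L A l) ⊗ₜ[L] (1 : A)) (algebraMap L A (σ l))
      (τ (algebraMap L A l)) ?_ (hτ _)).symm
    have h1 : e.symm (algebraMap L A l) = σ l • (1 : B) := by
      rw [Algebra.algebraMap_eq_smul_one, he', map_one]
    have h2 : (algebraMap L A (σ l)) = σ l • (1 : A) :=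
      Algebra.algebraMap_eq_smul_one _
    rw [h1, h2, TensorProduct.smul_tmul, TensorProduct.tmul_smul, sub_self]
    exact M.zero_mem
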